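/- Let A be a symmetric real n×n matrix with spectral spread ρ = λ₁ − λₙ and let γ > 0, β ≥ 2(1+γ)ρn. Then for every z ∈ ℝⁿ with ‖z‖₂ = 1 and min_k z_k² ≤ (n−1)/(4n²), there exists v ∈ ℝⁿ with ‖v‖₂ = 1, vᵀz = 0, and vᵀAv − zᵀAz + 6β Σₖ z_k² v_k² − 2β Σₖ z_k⁴ ≤ −γρ. -/

import Mathlib

open Matrix Finset

lemma rayleigh {n : ℕ} (A : Matrix (Fin n) (Fin n) ℝ) (hA : A.IsHermitian)
    (w : Fin n → ℝ) (hw : ∑ k, w k ^ 2 = 1) :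
    (⨅ i, hA.eigenvalues i) ≤ w ⬝ᵥ A.mulVec w ∧ w ⬝ᵥ A.mulVec w ≤ ⨆ i, hA.eigenvalues i := by
  have hn : Nonempty (Fin n) := by
    rcases Nat.eq_zero_or_pos n with h | h
    · exfalso
      subst h
      simp [Finset.univ_eq_empty] at hw
    · exact ⟨⟨0, h⟩⟩
  set U : Matrix (Fin n) (Fin n) ℝ := (hA.eigenvectorUnitary : Matrix (Fin n) (Fin n) ℝ) with hUdef
  have hstar : star U = Uᵀ := by
    ext i j; simp [Matrix.star_apply]
  have hUU : U * Uᵀ = 1 := by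
    rw [← hstar]
    exact (Matrix.mem_unitaryGroup_iff).mp hA.eigenvectorUnitary.2
  set c : Fin n → ℝ := Uᵀ *ᵥ w with hcdef
  have hc : ∑ i, c i ^ 2 = 1 := by
    have h1 : ∑ i, c i ^ 2 = c ⬝ᵥ c := by simp [dotProduct, sq]
    rw [h1, hcdef, mulVec_transpose, ← dotProduct_mulVec, ← mulVec_transpose,
      mulVec_mulVec, hUU, one_mulVec]
    simpa [dotProduct, sq] using hw
  have hrep : w ⬝ᵥ A.mulVec w = ∑ i, hA.eigenvalues i * c i ^ 2 := by
    conv_lhs => rw [hA.spectral_theorem]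
    rw [Unitary.conjStarAlgAut_apply, ← hUdef, hstar]
    rw [← mulVec_mulVec, ← mulVec_mulVec, dotProduct_mulVec, ← mulVec_transpose]
    have hdiag : (Matrix.diagonal (RCLike.ofReal ∘ hA.eigenvalues) : Matrix (Fin n) (Fin n) ℝ) *ᵥ c
        = fun i => hA.eigenvalues i * c i := by
      ext i; simp [mulVec_diagonal]
    rw [← hcdef, hdiag]
    simp only [dotProduct]
    exact Finset.sum_congr rfl fun i _ => by ring
  have hsq : ∀ i, (0:ℝ) ≤ c i ^ 2 := fun i => sq_nonneg _
  constructor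
  · rw [hrep]
    calc (⨅ i, hA.eigenvalues i) = (⨅ i, hA.eigenvalues i) * ∑ i, c i ^ 2 := by rw [hc, mul_one]
    _ = ∑ i, (⨅ i, hA.eigenvalues i) * c i ^ 2 := Finset.mul_sum _ _ _
    _ ≤ ∑ i, hA.eigenvalues i * c i ^ 2 :=
        Finset.sum_le_sum fun i _ => mul_le_mul_of_nonneg_right
          (ciInf_le (Set.Finite.bddBelow (Set.finite_range _)) i) (hsq i)
  · rw [hrep]
    calc ∑ i, hA.eigenvalues i * c i ^ 2 ≤ ∑ i, (⨆ i, hA.eigenvalues i) * c i ^ 2 :=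
        Finset.sum_le_sum fun i _ => mul_le_mul_of_nonneg_right
          (le_ciSup (Set.Finite.bddAbove (Set.finite_range _)) i) (hsq i)
    _ = (⨆ i, hA.eigenvalues i) * ∑ i, c i ^ 2 := (Finset.mul_sum _ _ _).symm
    _ = _ := by rw [hc, mul_one]

set_option maxHeartbeats 1000000 in
theorem stmt12 {n : ℕ} (hn : 2 ≤ n) (A : Matrix (Fin n) (Fin n) ℝ) (hA : A.IsHermitian)
    (γ β ρ : ℝ) (hγ : 0 < γ)
    (hρ : ρ = (⨆ i, hA.eigenvalues i) - (⨅ i, hA.eigenvalues i))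
    (hβ : 2 * (1 + γ) * ρ * n ≤ β)
    (z : Fin n → ℝ) (hz : ∑ k, z k ^ 2 = 1)
    (hz0 : (⨅ k, z k ^ 2) ≤ ((n : ℝ) - 1) / (4 * (n : ℝ) ^ 2)) :
    ∃ v : Fin n → ℝ, ∑ k, v k ^ 2 = 1 ∧ ∑ k, v k * z k = 0 ∧
      v ⬝ᵥ A.mulVec v - z ⬝ᵥ A.mulVec z
        + 6 * β * ∑ k, z k ^ 2 * v k ^ 2 - 2 * β * ∑ k, z k ^ 4 ≤ -(γ * ρ) := by
  have hn2 : (2:ℝ) ≤ (n:ℝ) := by exact_mod_cast hn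
  have hn0 : (0:ℝ) < (n:ℝ) := by linarith
  have hne : Nonempty (Fin n) := ⟨⟨0, by omega⟩⟩
  obtain ⟨k₀, -, hk₀⟩ := Finset.exists_min_image Finset.univ (fun k => z k ^ 2)
    ⟨Classical.arbitrary (Fin n), Finset.mem_univ _⟩
  set a : ℝ := z k₀ ^ 2 with hadef
  have ha0 : (0:ℝ) ≤ a := sq_nonneg _
  have hainf : a ≤ ⨅ k, z k ^ 2 := le_ciInf fun k => hk₀ k (Finset.mem_univ k)
  have hab : a ≤ ((n:ℝ) - 1) / (4 * (n:ℝ) ^ 2) := le_trans hainf hz0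
  have hab' : 4 * (n:ℝ)^2 * a ≤ (n:ℝ) - 1 := by
    rw [le_div_iff₀ (by positivity)] at hab
    linarith
  have hna4 : (n:ℝ) * a ≤ 1/4 := by nlinarith
  have han : a * n ≤ 1 := by nlinarith
  have ha1 : a < 1 := by nlinarith
  have ht : (0:ℝ) < 1 - a := by linarith
  have h4a : a ≤ 1/8 := by nlinarith
  set s : ℝ := Real.sqrt (1 - a) with hsdef
  have hs2 : s ^ 2 = 1 - a := Real.sq_sqrt ht.le
  have hs0 : 0 < s := Real.sqrt_pos.2 ht
  set Q : ℝ := ∑ k, z k ^ 4 with hQdef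
  have hQn : 1 ≤ (n:ℝ) * Q := by
    have h1 := sq_sum_le_card_mul_sum_sq (s := (Finset.univ : Finset (Fin n)))
      (f := fun k => z k ^ 2)
    simp only [hz, one_pow, Finset.card_univ, Fintype.card_fin] at h1
    have h4 : ∑ k, (z k ^ 2) ^ 2 = Q := by
      rw [hQdef]; exact Finset.sum_congr rfl fun k _ => by ring
    rw [h4] at h1
    exact_mod_cast h1
  set v : Fin n → ℝ := fun k => ((if k = k₀ then (1:ℝ) else 0) - z k₀ * z k) / s with hvdef
  have hv2 : ∑ k, v k ^ 2 = 1 := by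
    have e2 : ∀ k : Fin n, v k ^ 2
        = ((if k = k₀ then 1 - 2 * z k₀ ^ 2 else 0) + z k₀ ^ 2 * z k ^ 2) / s ^ 2 := by
      intro k
      rw [hvdef]
      by_cases h : k = k₀ <;> simp only [h, eq_self_iff_true, ↓reduceIte] <;> field_simp [h, hs0.ne'] <;> ring
    rw [Finset.sum_congr rfl fun k _ => e2 k, ← Finset.sum_div, Finset.sum_add_distrib,
      Finset.sum_ite_eq' Finset.univ k₀ (fun _ => 1 - 2 * z k₀ ^ 2), ← Finset.mul_sum, hz, hs2]
    simp only [Finset.mem_univ, if_true, mul_one, ← hadef]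
    field_simp
    ring
  have hvz : ∑ k, v k * z k = 0 := by
    have e1 : ∀ k : Fin n, v k * z k
        = ((if k = k₀ then z k₀ else 0) - z k₀ * z k ^ 2) / s := by
      intro k
      rw [hvdef]
      by_cases h : k = k₀ <;> simp only [h, eq_self_iff_true, ↓reduceIte] <;> field_simp [h, hs0.ne'] <;> ring
    rw [Finset.sum_congr rfl fun k _ => e1 k, ← Finset.sum_div, Finset.sum_sub_distrib,
      Finset.sum_ite_eq' Finset.univ k₀ (fun _ => z k₀), ← Finset.mul_sum, hz]
    simp
  set S : ℝ := ∑ k, z k ^ 2 * v k ^ 2 with hSdef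
  have hS : S * (1 - a) = a * (1 - 2 * a) + a * Q := by
    have e3 : ∀ k : Fin n, z k ^ 2 * v k ^ 2
        = ((if k = k₀ then z k₀ ^ 2 * (1 - 2 * z k₀ ^ 2) else 0) + z k₀ ^ 2 * z k ^ 4) / s ^ 2 := by
      intro k
      rw [hvdef]
      by_cases h : k = k₀ <;> simp only [h, eq_self_iff_true, ↓reduceIte] <;> field_simp [h, hs0.ne'] <;> ring
    have hnum : S = (a * (1 - 2 * a) + a * Q) / (1 - a) := by
      rw [hSdef, Finset.sum_congr rfl fun k _ => e3 k, ← Finset.sum_div, Finset.sum_add_distrib,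
        Finset.sum_ite_eq' Finset.univ k₀ (fun _ => z k₀ ^ 2 * (1 - 2 * z k₀ ^ 2)),
        ← Finset.mul_sum, ← hQdef, hs2]
      simp only [Finset.mem_univ, if_true, ← hadef]
    rw [hnum, div_mul_cancel₀ _ (by linarith : (1:ℝ) - a ≠ 0)]
  have hP : 12 * (n:ℝ) * (a * (1 - 2*a) + a * Q) ≤ (4 * n * Q - 1) * (1 - a) := by
    nlinarith [mul_nonneg (mul_nonneg hn0.le (sub_nonneg.2 hQn)) (by linarith : (0:ℝ) ≤ 1 - 4*a),
      hab', mul_nonneg (by linarith : (0:ℝ) ≤ 1/4 - (n:ℝ)*a) (by linarith : (0:ℝ) ≤ 1/2 - (n:ℝ)*a),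
      mul_nonneg hn0.le ha0, hn0]
  have hkey : 12 * (n:ℝ) * S ≤ 4 * n * Q - 1 := by
    have h12 : (12 * (n:ℝ) * S) * (1 - a) ≤ (4 * n * Q - 1) * (1 - a) := by
      calc (12 * (n:ℝ) * S) * (1 - a) = 12 * n * (S * (1 - a)) := by ring
      _ = 12 * n * (a * (1 - 2 * a) + a * Q) := by rw [hS]
      _ ≤ _ := hP
    exact le_of_mul_le_mul_right h12 ht
  obtain ⟨hz_lo, hz_hi⟩ := rayleigh A hA z hz
  obtain ⟨hv_lo, hv_hi⟩ := rayleigh A hA v hv2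
  have hray : v ⬝ᵥ A.mulVec v - z ⬝ᵥ A.mulVec z ≤ ρ := by rw [hρ]; linarith
  have hρ0 : 0 ≤ ρ := by rw [hρ]; linarith
  have hβ0 : 0 ≤ β := by
    have h0 : (0:ℝ) ≤ 2 * (1 + γ) * ρ * n := by positivity
    linarith
  refine ⟨v, hv2, hvz, ?_⟩
  nlinarith [mul_nonneg hβ0 (by linarith : (0:ℝ) ≤ 4*n*Q - 1 - 12*n*S),
    mul_le_mul_of_nonneg_left hray hn0.le, hβ, hρ0, hn0]
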